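/- Let m = 2n, ε = (ε_1,...,ε_m) i.i.d. uniform ±1 signs, t(ε) a uniformly random nearest balanced sign vector to ε in Hamming distance. Then for each coordinate q, the conditional probability P(ε_q ≠ t_q(ε) | t(ε) = e) = (1/2) · binom(m,n) · 2^{−m} ≤ 1/√(2πm), for any balanced sign vector e. -/

import Mathlib

open Finset
open scoped Classical

/-- Sign vectors on `Fin m` with exactly `n` coordinates equal to `+1`
(encoded as `true`). -/
noncomputable def balanced (m n : ℕ) : Finset (Fin m → Bool) :=
  Finset.univ.filter fun v => (Finset.univ.filter fun i => v i = true).card = n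

/-- Hamming distance between two sign vectors. -/
def hamm {m : ℕ} (v w : Fin m → Bool) : ℕ :=
  (Finset.univ.filter fun i => v i ≠ w i).card

/-- `Tset m n v`: the balanced sign vectors at minimal Hamming distance
from `v`. -/
noncomputable def Tset (m n : ℕ) (v : Fin m → Bool) : Finset (Fin m → Bool) :=
  (balanced m n).filter fun w => ∀ w' ∈ balanced m n, hamm v w ≤ hamm v w'

set_option linter.unusedSectionVars false
set_option maxHeartbeats 1000000

namespace CouplingAux

variable {m n : ℕ}

noncomputable def trues {m : ℕ} (v : Fin m → Bool) : Finset (Fin m) :=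
  Finset.univ.filter fun i => v i = true

noncomputable def ofSet {m : ℕ} (A : Finset (Fin m)) : Fin m → Bool :=
  fun i => decide (i ∈ A)

lemma trues_ofSet (A : Finset (Fin m)) : trues (ofSet A) = A := by
  ext i; simp [trues, ofSet]

lemma ofSet_trues (v : Fin m → Bool) : ofSet (trues v) = v := by
  funext i; simp only [trues, ofSet, mem_filter, mem_univ, true_and]
  cases h : v i <;> simp [h]

lemma ofSet_injective : Function.Injective (ofSet (m := m)) := by
  intro A B h
  have := congrArg trues h
  rwa [trues_ofSet, trues_ofSet] at this

lemma ofSet_bijective : Function.Bijective (ofSet (m := m)) :=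
  ⟨ofSet_injective, fun v => ⟨trues v, ofSet_trues v⟩⟩

lemma mem_balanced_iff {v : Fin m → Bool} : v ∈ balanced m n ↔ (trues v).card = n := by
  simp [balanced, trues]

lemma hamm_eq (v w : Fin m → Bool) :
    hamm v w = (trues v \ trues w).card + (trues w \ trues v).card := by
  rw [hamm, ← Finset.card_union_of_disjoint disjoint_sdiff_sdiff]
  congr 1
  ext i
  cases hv : v i <;> cases hw : w i <;> simp [trues, hv, hw]

lemma key_card (v w : Fin m → Bool) :
    (trues v).card + (trues w \ trues v).card
      = (trues w).card + (trues v \ trues w).card := by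
  have h1 := Finset.card_sdiff_add_card_inter (trues v) (trues w)
  have h2 := Finset.card_sdiff_add_card_inter (trues w) (trues v)
  rw [Finset.inter_comm] at h2
  omega

lemma hamm_lower (v w : Fin m → Bool) :
    Nat.dist (trues v).card (trues w).card ≤ hamm v w := by
  have h := key_card v w
  rw [hamm_eq]
  unfold Nat.dist
  omega

lemma hamm_of_subset_right {v w : Fin m → Bool} (h : trues w ⊆ trues v) :
    hamm v w = (trues v).card - (trues w).card := by
  rw [hamm_eq, Finset.sdiff_eq_empty_iff_subset.mpr h, Finset.card_sdiff_of_subset h]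
  simp

lemma hamm_of_subset_left {v w : Fin m → Bool} (h : trues v ⊆ trues w) :
    hamm v w = (trues w).card - (trues v).card := by
  rw [hamm_eq, Finset.sdiff_eq_empty_iff_subset.mpr h, Finset.card_sdiff_of_subset h]
  simp

lemma exists_min (hm : m = 2 * n) (v : Fin m → Bool) :
    ∃ w ∈ balanced m n, hamm v w = Nat.dist (trues v).card n := by
  rcases le_total n (trues v).card with h | h
  · obtain ⟨s, hs, hcard⟩ := Finset.exists_subset_card_eq h
    refine ⟨ofSet s, mem_balanced_iff.2 (by rw [trues_ofSet]; exact hcard), ?_⟩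
    have := hamm_of_subset_right (v := v) (w := ofSet s) (by rw [trues_ofSet]; exact hs)
    rw [this, trues_ofSet, hcard]
    unfold Nat.dist; omega
  · have hn : n ≤ (Finset.univ : Finset (Fin m)).card := by
      simp [hm]; omega
    obtain ⟨u, hvu, -, hcard⟩ :=
      Finset.exists_subsuperset_card_eq (Finset.subset_univ (trues v)) h hn
    refine ⟨ofSet u, mem_balanced_iff.2 (by rw [trues_ofSet]; exact hcard), ?_⟩
    have := hamm_of_subset_left (v := v) (w := ofSet u) (by rw [trues_ofSet]; exact hvu)
    rw [this, trues_ofSet, hcard]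
    unfold Nat.dist; omega

lemma mem_Tset_iff (hm : m = 2 * n) {v w : Fin m → Bool} :
    w ∈ Tset m n v ↔ w ∈ balanced m n ∧ (trues w ⊆ trues v ∨ trues v ⊆ trues w) := by
  constructor
  · intro hw
    rw [Tset, mem_filter] at hw
    obtain ⟨hb, hmin⟩ := hw
    refine ⟨hb, ?_⟩
    obtain ⟨w0, hw0b, hw0⟩ := exists_min hm v
    have h1 : hamm v w ≤ Nat.dist (trues v).card n := hw0 ▸ hmin w0 hw0b
    have ha := hamm_eq v w
    have hk := key_card v w
    have hn' : (trues w).card = n := mem_balanced_iff.1 hb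
    by_contra hc
    push_neg at hc
    obtain ⟨h2, h3⟩ := hc
    have h2' : 0 < (trues w \ trues v).card := by
      rw [Finset.card_pos, Finset.sdiff_nonempty]; exact h2
    have h3' : 0 < (trues v \ trues w).card := by
      rw [Finset.card_pos, Finset.sdiff_nonempty]; exact h3
    unfold Nat.dist at h1
    omega
  · rintro ⟨hb, hsub⟩
    rw [Tset, mem_filter]
    refine ⟨hb, fun w' hw' => ?_⟩
    have lower := hamm_lower v w'
    have hn' : (trues w).card = n := mem_balanced_iff.1 hb
    have hn'' : (trues w').card = n := mem_balanced_iff.1 hw'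
    rw [hn''] at lower
    have : hamm v w = Nat.dist (trues v).card n := by
      rcases hsub with h | h
      · rw [hamm_of_subset_right h, hn']
        have := Finset.card_le_card h
        unfold Nat.dist; omega
      · rw [hamm_of_subset_left h, hn']
        have := Finset.card_le_card h
        unfold Nat.dist; omega
    omega

lemma Tset_eq_ge (hm : m = 2 * n) {v : Fin m → Bool} (h : n ≤ (trues v).card) :
    Tset m n v = (Finset.powersetCard n (trues v)).image ofSet := by
  ext w
  rw [mem_Tset_iff hm, Finset.mem_image]
  constructor
  · rintro ⟨hb, hsub | hsub⟩
    · exact ⟨trues w, Finset.mem_powersetCard.2 ⟨hsub, mem_balanced_iff.1 hb⟩, ofSet_trues w⟩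
    · have h1 : (trues w).card = n := mem_balanced_iff.1 hb
      have h2 := Finset.card_le_card hsub
      have heq : trues v = trues w := Finset.eq_of_subset_of_card_le hsub (by omega)
      exact ⟨trues w, Finset.mem_powersetCard.2 ⟨heq ▸ Finset.Subset.refl _, h1⟩,
        ofSet_trues w⟩
  · rintro ⟨s, hs, rfl⟩
    rw [Finset.mem_powersetCard] at hs
    exact ⟨mem_balanced_iff.2 (by rw [trues_ofSet]; exact hs.2),
      Or.inl (by rw [trues_ofSet]; exact hs.1)⟩

lemma card_Tset_ge (hm : m = 2 * n) {v : Fin m → Bool} (h : n ≤ (trues v).card) :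
    (Tset m n v).card = ((trues v).card).choose n := by
  rw [Tset_eq_ge hm h, Finset.card_image_of_injective _ ofSet_injective,
    Finset.card_powersetCard]

lemma Tset_eq_le (hm : m = 2 * n) {v : Fin m → Bool} (h : (trues v).card ≤ n) :
    Tset m n v = (Finset.powersetCard (n - (trues v).card) (trues v)ᶜ).image
      (fun s => ofSet (trues v ∪ s)) := by
  ext w
  rw [mem_Tset_iff hm, Finset.mem_image]
  constructor
  · rintro ⟨hb, hsub | hsub⟩
    · have h1 : (trues w).card = n := mem_balanced_iff.1 hb
      have h2 := Finset.card_le_card hsub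
      have heq : trues w = trues v := Finset.eq_of_subset_of_card_le hsub (by omega)
      refine ⟨∅, Finset.mem_powersetCard.2 ⟨Finset.empty_subset _, by simp; omega⟩, ?_⟩
      rw [Finset.union_empty, ← heq, ofSet_trues]
    · refine ⟨trues w \ trues v, Finset.mem_powersetCard.2 ⟨?_, ?_⟩, ?_⟩
      · intro i hi
        rw [Finset.mem_compl]
        exact (Finset.mem_sdiff.1 hi).2
      · rw [Finset.card_sdiff_of_subset hsub, mem_balanced_iff.1 hb]
      · rw [Finset.union_sdiff_of_subset hsub, ofSet_trues]
  · rintro ⟨s, hs, rfl⟩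
    rw [Finset.mem_powersetCard] at hs
    have hdisj : Disjoint (trues v) s := by
      rw [Finset.disjoint_left]
      intro i hi his
      exact absurd hi (by simpa using hs.1 his)
    have hcard : (trues v ∪ s).card = n := by
      rw [Finset.card_union_of_disjoint hdisj, hs.2]; omega
    refine ⟨mem_balanced_iff.2 (by rw [trues_ofSet]; exact hcard),
      Or.inr (by rw [trues_ofSet]; exact Finset.subset_union_left)⟩

lemma card_Tset_le (hm : m = 2 * n) {v : Fin m → Bool} (h : (trues v).card ≤ n) :
    (Tset m n v).card = (m - (trues v).card).choose (n - (trues v).card) := by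
  rw [Tset_eq_le hm h, Finset.card_image_of_injOn, Finset.card_powersetCard,
    Finset.card_compl, Fintype.card_fin]
  intro s hs t ht hst
  rw [Finset.mem_coe, Finset.mem_powersetCard] at hs ht
  have := ofSet_injective hst
  have hds : Disjoint (trues v) s := by
    rw [Finset.disjoint_left]; intro i hi his; exact absurd hi (by simpa using hs.1 his)
  have hdt : Disjoint (trues v) t := by
    rw [Finset.disjoint_left]; intro i hi hit; exact absurd hi (by simpa using ht.1 hit)
  calc s = (trues v ∪ s) \ trues v := by rw [Finset.union_sdiff_cancel_left hds]
    _ = (trues v ∪ t) \ trues v := by rw [this]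
    _ = t := Finset.union_sdiff_cancel_left hdt

section sums
variable {α : Type*} [Fintype α] [DecidableEq α]

lemma sum_subset_card_eq (S : Finset α) (g : ℕ → ℝ) :
    ∑ A ∈ S.powerset, g A.card
      = ∑ j ∈ Finset.range (S.card + 1), (S.card.choose j : ℝ) * g j := by
  rw [Finset.sum_powerset]
  refine Finset.sum_congr rfl fun j hj => ?_
  rw [Finset.sum_powersetCard]
  simp [nsmul_eq_mul]

lemma sum_superset_card_eq (S : Finset α) (g : ℕ → ℝ) :
    ∑ A ∈ Finset.univ.filter (fun A : Finset α => S ⊆ A), g A.card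
      = ∑ j ∈ Finset.range (Sᶜ.card + 1), (Sᶜ.card.choose j : ℝ) * g (S.card + j) := by
  rw [← sum_subset_card_eq Sᶜ (fun j => g (S.card + j))]
  refine Finset.sum_nbij' (fun A => A \ S) (fun t => S ∪ t) ?_ ?_ ?_ ?_ ?_
  · intro A hA
    rw [Finset.mem_filter] at hA
    rw [Finset.mem_powerset]
    intro i hi
    rw [Finset.mem_compl]
    exact (Finset.mem_sdiff.1 hi).2
  · intro t ht
    rw [Finset.mem_filter]
    exact ⟨Finset.mem_univ _, Finset.subset_union_left⟩
  · intro A hA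
    rw [Finset.mem_filter] at hA
    exact Finset.union_sdiff_of_subset hA.2
  · intro t ht
    rw [Finset.mem_powerset] at ht
    apply Finset.union_sdiff_cancel_left
    rw [Finset.disjoint_left]
    intro i hi hit
    exact absurd hi (by simpa using ht hit)
  · intro A hA
    rw [Finset.mem_filter] at hA
    have h1 : (A \ S).card = A.card - S.card := Finset.card_sdiff_of_subset hA.2
    have h2 := Finset.card_le_card hA.2
    congr 1
    omega

end sums

section numeric

lemma nat_telescope_core (n j : ℕ) (hj : j < n) :
    (n - 1).choose j * (n + j + 1).choose n
      = (2 * (n - 1).choose j + (n - 1).choose (j + 1)) * (n + j).choose n := by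
  apply Nat.eq_of_mul_eq_mul_right (Nat.succ_pos j)
  have hsymm1 : (n + j + 1).choose n = (n + j + 1).choose (j + 1) := by
    have := Nat.choose_symm (show j + 1 ≤ n + j + 1 by omega)
    rw [show n + j + 1 - (j + 1) = n by omega] at this
    exact this
  have hsymm2 : (n + j).choose n = (n + j).choose j := by
    have := Nat.choose_symm (show j ≤ n + j by omega)
    rw [show n + j - j = n by omega] at this
    exact this
  have hsucc : (n + j + 1) * (n + j).choose j = (n + j + 1).choose (j + 1) * (j + 1) :=
    Nat.add_one_mul_choose_eq (n + j) j
  have hright : (n - 1).choose (j + 1) * (j + 1) = (n - 1).choose j * (n - 1 - j) :=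
    Nat.choose_succ_right_eq (n - 1) j
  have harith : n + j + 1 = 2 * (j + 1) + (n - 1 - j) := by omega
  calc (n - 1).choose j * (n + j + 1).choose n * (j + 1)
      = (n - 1).choose j * ((n + j + 1).choose (j + 1) * (j + 1)) := by
        rw [hsymm1]; ring
    _ = (n - 1).choose j * ((n + j + 1) * (n + j).choose j) := by rw [← hsucc]
    _ = (n - 1).choose j * ((2 * (j + 1) + (n - 1 - j)) * (n + j).choose j) := by
        rw [← harith]
    _ = (2 * (n - 1).choose j * (j + 1) + (n - 1).choose j * (n - 1 - j)) *
          (n + j).choose j := by ring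
    _ = (2 * (n - 1).choose j * (j + 1) + (n - 1).choose (j + 1) * (j + 1)) *
          (n + j).choose j := by rw [hright]
    _ = (2 * (n - 1).choose j + (n - 1).choose (j + 1)) * (n + j).choose n * (j + 1) := by
        rw [hsymm2]; ring

lemma real_telescope (n j : ℕ) (hj : j < n) :
    ((n - 1).choose j : ℝ) / ((n + 1 + j).choose n)
      = (1 / 2) * (((n - 1).choose j : ℝ) / ((n + j).choose n)
          - ((n - 1).choose (j + 1) : ℝ) / ((n + j + 1).choose n)) := by
  have e1 : n + 1 + j = n + j + 1 := by omega
  rw [e1]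
  have hD1 : (0 : ℝ) < ((n + j).choose n : ℝ) := by
    exact_mod_cast Nat.choose_pos (by omega)
  have hD2 : (0 : ℝ) < ((n + j + 1).choose n : ℝ) := by
    exact_mod_cast Nat.choose_pos (by omega)
  have hcore' : ((n - 1).choose j : ℝ) * ((n + j + 1).choose n)
      = (2 * ((n - 1).choose j : ℝ) + ((n - 1).choose (j + 1) : ℝ)) * ((n + j).choose n) := by
    exact_mod_cast nat_telescope_core n j hj
  field_simp
  nlinarith [hcore', hD1, hD2]

lemma identityA (n : ℕ) (hn : 0 < n) :
    ∑ j ∈ Finset.range n, ((n - 1).choose j : ℝ) / ((n + 1 + j).choose n) = 1 / 2 := by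
  have h : ∀ j ∈ Finset.range n,
      ((n - 1).choose j : ℝ) / ((n + 1 + j).choose n)
        = (1/2) * ((fun j => ((n - 1).choose j : ℝ) / ((n + j).choose n)) j
            - (fun j => ((n - 1).choose j : ℝ) / ((n + j).choose n)) (j + 1)) := by
    intro j hj
    rw [Finset.mem_range] at hj
    have := real_telescope n j hj
    rw [show n + j + 1 = n + (j + 1) by omega] at this
    simpa using this
  rw [Finset.sum_congr rfl h, ← Finset.mul_sum, Finset.sum_range_sub']
  simp [Nat.choose_eq_zero_of_lt (show n - 1 < n by omega)]

lemma identityB (n : ℕ) (hn : 0 < n) :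
    ∑ j ∈ Finset.range n, ((n - 1).choose j : ℝ) / ((2 * n - j).choose (n - j)) = 1 / 2 := by
  rw [← identityA n hn,
    ← Finset.sum_range_reflect (fun j => ((n - 1).choose j : ℝ) / ((n + 1 + j).choose n)) n]
  refine Finset.sum_congr rfl fun j hj => ?_
  rw [Finset.mem_range] at hj
  have e1 : (n - 1).choose (n - 1 - j) = (n - 1).choose j := by
    have := Nat.choose_symm (show n - 1 - j ≤ n - 1 by omega)
    rw [show n - 1 - (n - 1 - j) = j by omega] at this
    exact this.symm
  have e2 : n + 1 + (n - 1 - j) = 2 * n - j := by omega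
  have e3 : (2 * n - j).choose n = (2 * n - j).choose (n - j) := by
    have := Nat.choose_symm (show n ≤ 2 * n - j by omega)
    rw [show 2 * n - j - n = n - j by omega] at this
    exact this.symm
  rw [e1, e2, e3]

lemma nat_central_sum (n : ℕ) :
    2 * ∑ j ∈ Finset.range (n + 1), (2 * n).choose (n + j)
      = 2 ^ (2 * n) + (2 * n).choose n := by
  have htot := Nat.sum_range_choose (2 * n)
  have hsplit : ∑ k ∈ Finset.range (2 * n + 1), (2 * n).choose k
      = ∑ k ∈ Finset.range n, (2 * n).choose k
        + ∑ k ∈ Finset.Ico n (2 * n + 1), (2 * n).choose k := by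
    simp only [Finset.range_eq_Ico]
    rw [Finset.sum_Ico_consecutive _ (Nat.zero_le n) (by omega)]
  have hIco : ∑ k ∈ Finset.Ico n (2 * n + 1), (2 * n).choose k
      = ∑ j ∈ Finset.range (n + 1), (2 * n).choose (n + j) := by
    rw [Finset.sum_Ico_eq_sum_range, show 2 * n + 1 - n = n + 1 by omega]
  have hrefl : ∑ k ∈ Finset.range n, (2 * n).choose k
      = ∑ j ∈ Finset.range n, (2 * n).choose (n + 1 + j) := by
    rw [← Finset.sum_range_reflect (fun j => (2 * n).choose (n + 1 + j)) n]
    refine Finset.sum_congr rfl fun k hk => ?_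
    rw [Finset.mem_range] at hk
    rw [show n + 1 + (n - 1 - k) = 2 * n - k by omega]
    have := Nat.choose_symm (show k ≤ 2 * n by omega)
    exact this.symm
  have hsucc : ∑ j ∈ Finset.range (n + 1), (2 * n).choose (n + j)
      = (∑ j ∈ Finset.range n, (2 * n).choose (n + 1 + j)) + (2 * n).choose n := by
    rw [Finset.sum_range_succ' (fun j => (2 * n).choose (n + j)) n]
    simp only [Nat.add_zero]
    congr 1
    refine Finset.sum_congr rfl fun j hj => ?_
    congr 1
    omega
  rw [← htot, hsplit, hIco, hrefl, hsucc]
  ring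

lemma trinomial (n j : ℕ) (hj : j ≤ n) :
    (n.choose j : ℝ) / ((n + j).choose n) * ((2 * n).choose n)
      = ((2 * n).choose (n + j) : ℝ) := by
  have hnat : (2 * n).choose (n + j) * (n + j).choose n = (2 * n).choose n * n.choose j := by
    have := Nat.choose_mul (n := 2 * n) (show n ≤ n + j by omega)
    rw [show 2 * n - n = n by omega, show n + j - n = j by omega] at this
    exact this
  have hpos : (0 : ℝ) < ((n + j).choose n : ℝ) := by
    exact_mod_cast Nat.choose_pos (by omega)
  have hc : ((2 * n).choose (n + j) : ℝ) * ((n + j).choose n)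
      = ((2 * n).choose n : ℝ) * (n.choose j) := by exact_mod_cast hnat
  field_simp
  linarith [hc]

lemma identityDen (n : ℕ) (hn : 0 < n) :
    ∑ j ∈ Finset.range (n + 1), (n.choose j : ℝ) / ((n + j).choose n)
      + ∑ j ∈ Finset.range (n + 1), (n.choose j : ℝ) / ((2 * n - j).choose (n - j))
      - 1 = 2 ^ (2 * n) / ((2 * n).choose n) := by
  have hrefl : ∑ j ∈ Finset.range (n + 1), (n.choose j : ℝ) / ((2 * n - j).choose (n - j))
      = ∑ j ∈ Finset.range (n + 1), (n.choose j : ℝ) / ((n + j).choose n) := by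
    rw [← Finset.sum_range_reflect (fun j => (n.choose j : ℝ) / ((n + j).choose n)) (n + 1)]
    refine Finset.sum_congr rfl fun j hj => ?_
    rw [Finset.mem_range] at hj
    have e0 : n + 1 - 1 - j = n - j := by omega
    rw [e0]
    have e1 : n.choose (n - j) = n.choose j := Nat.choose_symm (show j ≤ n by omega)
    have e2 : n + (n - j) = 2 * n - j := by omega
    have e3 : (2 * n - j).choose n = (2 * n - j).choose (n - j) := by
      have := Nat.choose_symm (show n ≤ 2 * n - j by omega)
      rw [show 2 * n - j - n = n - j by omega] at this
      exact this.symm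
    rw [e1, e2, e3]
  rw [hrefl]
  have hS : (∑ j ∈ Finset.range (n + 1), (n.choose j : ℝ) / ((n + j).choose n))
      * ((2 * n).choose n)
      = ∑ j ∈ Finset.range (n + 1), ((2 * n).choose (n + j) : ℝ) := by
    rw [Finset.sum_mul]
    exact Finset.sum_congr rfl fun j hj =>
      trinomial n j (by rw [Finset.mem_range] at hj; omega)
  have hC : (0 : ℝ) < ((2 * n).choose n : ℝ) := by
    exact_mod_cast Nat.choose_pos (by omega)
  have hcentral : 2 * (∑ j ∈ Finset.range (n + 1), ((2 * n).choose (n + j) : ℝ))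
      = 2 ^ (2 * n) + ((2 * n).choose n : ℝ) := by
    exact_mod_cast nat_central_sum n
  field_simp
  linear_combination 2 * hS + hcentral

end numeric

lemma den_eq (hn : 0 < n) (hm : m = 2 * n) {e : Fin m → Bool} (he : e ∈ balanced m n) :
    (∑ ε : Fin m → Bool, if e ∈ Tset m n ε then (1 : ℝ) / (Tset m n ε).card else 0)
      = 2 ^ m / (m.choose n : ℝ) := by
  have hTe : (trues e).card = n := mem_balanced_iff.1 he
  have htrans : (∑ ε : Fin m → Bool, if e ∈ Tset m n ε then (1:ℝ)/(Tset m n ε).card else 0)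
      = ∑ A : Finset (Fin m),
          (if e ∈ Tset m n (ofSet A) then (1:ℝ)/(Tset m n (ofSet A)).card else 0) :=
    (Fintype.sum_bijective ofSet ofSet_bijective _ _ fun A => rfl).symm
  have hmem : ∀ A : Finset (Fin m),
      (e ∈ Tset m n (ofSet A)) ↔ (trues e ⊆ A ∨ A ⊆ trues e) := by
    intro A
    rw [mem_Tset_iff hm, trues_ofSet]
    exact ⟨fun h => h.2, fun h => ⟨he, h⟩⟩
  have hsplit : ∀ A : Finset (Fin m),
      (if e ∈ Tset m n (ofSet A) then (1:ℝ)/(Tset m n (ofSet A)).card else 0)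
        = (if trues e ⊆ A then (1:ℝ)/(Tset m n (ofSet A)).card else 0)
          + (if A ⊆ trues e then (1:ℝ)/(Tset m n (ofSet A)).card else 0)
          - (if A = trues e then (1:ℝ)/(Tset m n (ofSet A)).card else 0) := by
    intro A
    by_cases h1 : trues e ⊆ A <;> by_cases h2 : A ⊆ trues e
    · have h3 : A = trues e := Finset.Subset.antisymm h2 h1
      rw [if_pos ((hmem A).2 (Or.inl h1)), if_pos h1, if_pos h2, if_pos h3]
      ring
    · have h3 : ¬ (A = trues e) := fun h => h2 (h ▸ Finset.Subset.refl A)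
      rw [if_pos ((hmem A).2 (Or.inl h1)), if_pos h1, if_neg h2, if_neg h3]
      ring
    · have h3 : ¬ (A = trues e) := fun h => h1 (h ▸ Finset.Subset.refl A)
      rw [if_pos ((hmem A).2 (Or.inr h2)), if_neg h1, if_pos h2, if_neg h3]
      ring
    · have h3 : ¬ (A = trues e) := fun h => h1 (h ▸ Finset.Subset.refl A)
      rw [if_neg (fun h => (hmem A).1 h |>.elim h1 h2), if_neg h1, if_neg h2, if_neg h3]
      ring
  rw [htrans, Finset.sum_congr rfl fun A _ => hsplit A]
  rw [Finset.sum_sub_distrib, Finset.sum_add_distrib]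
  have hterm1 : (∑ A : Finset (Fin m),
      if trues e ⊆ A then (1:ℝ)/(Tset m n (ofSet A)).card else 0)
      = ∑ j ∈ Finset.range (n + 1), (n.choose j : ℝ) * ((1:ℝ)/((n + j).choose n)) := by
    rw [← Finset.sum_filter]
    rw [Finset.sum_congr rfl (fun A hA => ?_), sum_superset_card_eq (trues e)
      (fun x => (1:ℝ)/(x.choose n))]
    · have hc : (trues e)ᶜ.card = n := by
        rw [Finset.card_compl, Fintype.card_fin, hTe, hm]; omega
      rw [hc, hTe]
    · rw [Finset.mem_filter] at hA
      have hcard : n ≤ A.card := hTe ▸ Finset.card_le_card hA.2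
      rw [card_Tset_ge hm (by rw [trues_ofSet]; exact hcard), trues_ofSet]
  have hterm2 : (∑ A : Finset (Fin m),
      if A ⊆ trues e then (1:ℝ)/(Tset m n (ofSet A)).card else 0)
      = ∑ j ∈ Finset.range (n + 1),
          (n.choose j : ℝ) * ((1:ℝ)/((m - j).choose (n - j))) := by
    rw [← Finset.sum_filter]
    have hfeq : Finset.univ.filter (fun A : Finset (Fin m) => A ⊆ trues e)
        = (trues e).powerset := by
      ext A; simp [Finset.mem_powerset]
    rw [hfeq]
    rw [Finset.sum_congr rfl (fun A hA => ?_), sum_subset_card_eq (trues e)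
      (fun x => (1:ℝ)/((m - x).choose (n - x))), hTe]
    rw [Finset.mem_powerset] at hA
    have hcard : A.card ≤ n := hTe ▸ Finset.card_le_card hA
    rw [card_Tset_le hm (by rw [trues_ofSet]; exact hcard), trues_ofSet]
  have hterm3 : (∑ A : Finset (Fin m),
      if A = trues e then (1:ℝ)/(Tset m n (ofSet A)).card else 0) = 1 := by
    rw [Finset.sum_ite_eq' Finset.univ (trues e)
      (fun A => (1:ℝ)/(Tset m n (ofSet A)).card), if_pos (Finset.mem_univ _)]
    rw [card_Tset_ge hm (by rw [trues_ofSet, hTe]), trues_ofSet, hTe]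
    simp
  rw [hterm1, hterm2, hterm3]
  simp only [mul_one_div]
  subst hm
  rw [identityDen n hn]

lemma num_eq (hn : 0 < n) (hm : m = 2 * n) {e : Fin m → Bool} (he : e ∈ balanced m n)
    (q : Fin m) :
    (∑ ε : Fin m → Bool,
        if e ∈ Tset m n ε ∧ ε q ≠ e q then (1 : ℝ) / (Tset m n ε).card else 0)
      = 1 / 2 := by
  have hTe : (trues e).card = n := mem_balanced_iff.1 he
  have htrans : (∑ ε : Fin m → Bool,
        if e ∈ Tset m n ε ∧ ε q ≠ e q then (1:ℝ)/(Tset m n ε).card else 0)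
      = ∑ A : Finset (Fin m),
          (if e ∈ Tset m n (ofSet A) ∧ ofSet A q ≠ e q
            then (1:ℝ)/(Tset m n (ofSet A)).card else 0) :=
    (Fintype.sum_bijective ofSet ofSet_bijective _ _ fun A => rfl).symm
  have hmem : ∀ A : Finset (Fin m),
      (e ∈ Tset m n (ofSet A)) ↔ (trues e ⊆ A ∨ A ⊆ trues e) := by
    intro A
    rw [mem_Tset_iff hm, trues_ofSet]
    exact ⟨fun h => h.2, fun h => ⟨he, h⟩⟩
  rw [htrans]
  by_cases hq : e q = true
  · -- q ∈ trues e : condition is A ⊆ (trues e).erase q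
    have hqT : q ∈ trues e := by simp [trues, hq]
    have hcond : ∀ A : Finset (Fin m),
        ((e ∈ Tset m n (ofSet A) ∧ ofSet A q ≠ e q) ↔ A ⊆ (trues e).erase q) := by
      intro A
      rw [hmem A, hq]
      have hA : (ofSet A q ≠ true) ↔ q ∉ A := by simp [ofSet]
      rw [hA]
      constructor
      · rintro ⟨h1 | h1, h2⟩
        · exact absurd (h1 hqT) h2
        · exact Finset.subset_erase.2 ⟨h1, h2⟩
      · intro h
        obtain ⟨h1, h2⟩ := Finset.subset_erase.1 h
        exact ⟨Or.inr h1, h2⟩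
    simp only [hcond]
    rw [← Finset.sum_filter]
    have hfeq : Finset.univ.filter (fun A : Finset (Fin m) => A ⊆ (trues e).erase q)
        = ((trues e).erase q).powerset := by
      ext A; simp [Finset.mem_powerset]
    rw [hfeq]
    have hce : ((trues e).erase q).card = n - 1 := by
      rw [Finset.card_erase_of_mem hqT, hTe]
    have hw : ∀ A ∈ ((trues e).erase q).powerset,
        (1:ℝ)/(Tset m n (ofSet A)).card
          = (fun x => (1:ℝ)/((m - x).choose (n - x))) A.card := by
      intro A hA
      rw [Finset.mem_powerset] at hA
      have hcard : A.card ≤ n := by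
        have h1 := Finset.card_le_card hA
        omega
      rw [card_Tset_le hm (by rw [trues_ofSet]; exact hcard), trues_ofSet]
    rw [Finset.sum_congr rfl hw, sum_subset_card_eq ((trues e).erase q)
      (fun x => (1:ℝ)/((m - x).choose (n - x))), hce,
      show n - 1 + 1 = n by omega]
    subst hm
    rw [← identityB n hn]
    exact Finset.sum_congr rfl fun j hj => mul_one_div _ _
  · -- e q = false : condition is insert q (trues e) ⊆ A
    have hq' : e q = false := by
      cases h : e q
      · rfl
      · exact absurd h hq
    have hqT : q ∉ trues e := by simp [trues, hq']
    have hcond : ∀ A : Finset (Fin m),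
        ((e ∈ Tset m n (ofSet A) ∧ ofSet A q ≠ e q) ↔ insert q (trues e) ⊆ A) := by
      intro A
      rw [hmem A, hq']
      have hA : (ofSet A q ≠ false) ↔ q ∈ A := by simp [ofSet]
      rw [hA, Finset.insert_subset_iff]
      constructor
      · rintro ⟨h1 | h1, h2⟩
        · exact ⟨h2, h1⟩
        · exact absurd (h1 h2) hqT
      · rintro ⟨h1, h2⟩
        exact ⟨Or.inl h2, h1⟩
    simp only [hcond]
    rw [← Finset.sum_filter]
    have hcS : (insert q (trues e)).card = n + 1 := by
      rw [Finset.card_insert_of_notMem hqT, hTe]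
    have hcSc : (insert q (trues e))ᶜ.card = n - 1 := by
      rw [Finset.card_compl, Fintype.card_fin, hcS, hm]; omega
    have hw : ∀ A ∈ Finset.univ.filter (fun A : Finset (Fin m) => insert q (trues e) ⊆ A),
        (1:ℝ)/(Tset m n (ofSet A)).card = (fun x => (1:ℝ)/(x.choose n)) A.card := by
      intro A hA
      rw [Finset.mem_filter] at hA
      have hcard : n ≤ A.card := by
        have h1 := Finset.card_le_card hA.2
        omega
      rw [card_Tset_ge hm (by rw [trues_ofSet]; exact hcard), trues_ofSet]
    rw [Finset.sum_congr rfl hw, sum_superset_card_eq (insert q (trues e))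
      (fun x => (1:ℝ)/(x.choose n)), hcSc, hcS,
      show n - 1 + 1 = n by omega]
    rw [← identityA n hn]
    exact Finset.sum_congr rfl fun j hj => mul_one_div _ _

lemma stirling_lower (N : ℕ) (hN : 0 < N) :
    Real.sqrt Real.pi ≤ Stirling.stirlingSeq N := by
  have htend : Filter.Tendsto (Stirling.stirlingSeq ∘ Nat.succ)
      Filter.atTop (nhds (Real.sqrt Real.pi)) := by
    have := Stirling.tendsto_stirlingSeq_sqrt_pi.comp (Filter.tendsto_add_atTop_nat 1)
    simpa [Function.comp] using this
  have := Stirling.stirlingSeq'_antitone.le_of_tendsto htend (N - 1)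
  simpa [Function.comp, show N - 1 + 1 = N by omega] using this

lemma stirling_pos (N : ℕ) (hN : 0 < N) : 0 < Stirling.stirlingSeq N := by
  have := Stirling.stirlingSeq'_pos (N - 1)
  rwa [show N - 1 + 1 = N by omega] at this

lemma stirling_fact (N : ℕ) (hN : 0 < N) :
    ((Nat.factorial N : ℕ) : ℝ) = Stirling.stirlingSeq N
      * (Real.sqrt (2 * N) * ((N : ℝ) / Real.exp 1) ^ N) := by
  have hd : Real.sqrt (2 * N) * ((N : ℝ) / Real.exp 1) ^ N ≠ 0 := by
    have h1 : (0:ℝ) < N := by exact_mod_cast hN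
    positivity
  rw [Stirling.stirlingSeq, div_mul_cancel₀ _ hd]

lemma central_bound (n : ℕ) (hn : 0 < n) :
    (1 / 2 : ℝ) * ((2 * n).choose n : ℝ) / 2 ^ (2 * n)
      ≤ 1 / Real.sqrt (2 * Real.pi * (2 * n)) := by
  have hnR : (0:ℝ) < n := by exact_mod_cast hn
  set s1 := Stirling.stirlingSeq n with hs1
  set s2 := Stirling.stirlingSeq (2 * n) with hs2
  have hs1pos : 0 < s1 := stirling_pos n hn
  have hs2pos : 0 < s2 := stirling_pos (2 * n) (by omega)
  have hmono : s2 ≤ s1 := by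
    have := Stirling.stirlingSeq'_antitone (show n - 1 ≤ 2 * n - 1 by omega)
    simpa [Function.comp, show n - 1 + 1 = n by omega,
      show 2 * n - 1 + 1 = 2 * n by omega] using this
  have hlow : Real.sqrt Real.pi ≤ s1 := stirling_lower n hn
  have hkey : s2 * Real.sqrt Real.pi ≤ s1 ^ 2 := by
    have h1 : s2 * Real.sqrt Real.pi ≤ s1 * s1 :=
      mul_le_mul hmono hlow (Real.sqrt_nonneg _) (le_of_lt hs1pos)
    nlinarith [h1]
  -- expression for the central binomial coefficient
  have hfact1 := stirling_fact n hn
  have hfact2 := stirling_fact (2 * n) (by omega)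
  have hchoose : ((2 * n).choose n : ℝ)
      = ((Nat.factorial (2 * n) : ℕ) : ℝ)
        / ((Nat.factorial n : ℕ) * (Nat.factorial n : ℕ)) := by
    rw [Nat.cast_choose ℝ (show n ≤ 2 * n by omega),
      show 2 * n - n = n by omega]
  have hb : (0:ℝ) < ((n : ℝ) / Real.exp 1) ^ n := by positivity
  have hsq : (0:ℝ) < Real.sqrt (2 * n) := Real.sqrt_pos.2 (by positivity)
  have hsqn : (0:ℝ) < Real.sqrt n := Real.sqrt_pos.2 hnR
  have hsqpi : (0:ℝ) < Real.sqrt Real.pi := Real.sqrt_pos.2 Real.pi_pos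
  -- (2n/e)^(2n) = 2^(2n) * ((n/e)^n)^2
  have hpow : (((2 * n : ℕ) : ℝ) / Real.exp 1) ^ (2 * n)
      = 2 ^ (2 * n) * (((n : ℝ) / Real.exp 1) ^ n) ^ 2 := by
    have : ((2 * n : ℕ) : ℝ) / Real.exp 1 = 2 * ((n : ℝ) / Real.exp 1) := by
      push_cast; ring
    rw [this, mul_pow, ← pow_mul, show n * 2 = 2 * n by ring]
  have hsqrt2 : Real.sqrt (2 * ((2 * n : ℕ) : ℝ)) = 2 * Real.sqrt n := by
    have : 2 * ((2 * n : ℕ) : ℝ) = 4 * (n : ℝ) := by push_cast; ring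
    rw [this, show (4 : ℝ) * n = (2:ℝ)^2 * n by ring, Real.sqrt_mul (by positivity),
      Real.sqrt_sq (by norm_num)]
  have hsn2 : Real.sqrt (2 * (n:ℝ)) ^ 2 = 2 * n := Real.sq_sqrt (by positivity)
  have hC : ((2 * n).choose n : ℝ) = s2 * 2 ^ (2 * n) / (s1 ^ 2 * Real.sqrt n) := by
    have hsqrt2n : Real.sqrt (2 * (n:ℝ)) = Real.sqrt 2 * Real.sqrt n :=
      Real.sqrt_mul (by norm_num) _
    have h22 : Real.sqrt 2 * Real.sqrt 2 = 2 := Real.mul_self_sqrt (by norm_num)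
    have h2 : Real.sqrt n * Real.sqrt n = (n:ℝ) := Real.mul_self_sqrt (by positivity)
    rw [hchoose, hfact1, hfact2, hpow, hsqrt2, hsqrt2n]
    rw [div_eq_div_iff (by positivity) (by positivity)]
    ring_nf
    rw [Real.sq_sqrt (show (0:ℝ) ≤ 2 by norm_num), show n * 2 = 2 * n by ring]
    ring
  rw [hC]
  have hsqrtfull : Real.sqrt (2 * Real.pi * (2 * n))
      = 2 * (Real.sqrt Real.pi * Real.sqrt n) := by
    rw [show 2 * Real.pi * ((2:ℝ) * n) = (2:ℝ)^2 * (Real.pi * n) by ring,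
      Real.sqrt_mul (by positivity), Real.sqrt_sq (by norm_num),
      Real.sqrt_mul (le_of_lt Real.pi_pos)]
  rw [hsqrtfull]
  rw [div_le_div_iff₀ (by positivity) (by positivity)]
  have hp : (0:ℝ) < (2:ℝ) ^ (2 * n) := by positivity
  calc (1:ℝ) / 2 * (s2 * 2 ^ (2 * n) / (s1 ^ 2 * Real.sqrt n))
        * (2 * (Real.sqrt Real.pi * Real.sqrt n))
      = (s2 * Real.sqrt Real.pi) / (s1 ^ 2) * 2 ^ (2 * n) := by
        field_simp
    _ ≤ 1 * 2 ^ (2 * n) := by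
        apply mul_le_mul_of_nonneg_right _ (le_of_lt hp)
        rw [div_le_one (by positivity)]
        exact hkey
    _ = 1 * 2 ^ (2 * n) := by ring

end CouplingAux

/-- Coupling disagreement probability: for every coordinate `q` and every
balanced sign vector `e`,
`P(ε_q ≠ t_q(ε) | t(ε) = e) = (1/2)·C(m,n)·2^{−m} ≤ 1/√(2πm)`. -/
theorem coupling_disagreement_prob (n : ℕ) (hn : 0 < n) (m : ℕ)
    (hm : m = 2 * n) (q : Fin m) (e : Fin m → Bool) (he : e ∈ balanced m n) :
    (∑ ε : Fin m → Bool,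
        if e ∈ Tset m n ε ∧ ε q ≠ e q then (1 : ℝ) / (Tset m n ε).card else 0) /
      (∑ ε : Fin m → Bool,
        if e ∈ Tset m n ε then (1 : ℝ) / (Tset m n ε).card else 0)
      = (1 / 2) * (m.choose n : ℝ) / 2 ^ m ∧
    (1 / 2) * (m.choose n : ℝ) / 2 ^ m ≤ 1 / Real.sqrt (2 * Real.pi * m) := by
  constructor
  · rw [CouplingAux.num_eq hn hm he q, CouplingAux.den_eq hn hm he]
    have hC : (0:ℝ) < (m.choose n : ℝ) := by
      have : n ≤ m := by omega
      exact_mod_cast Nat.choose_pos this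
    have hp : (0:ℝ) < (2:ℝ) ^ m := by positivity
    field_simp
  · subst hm
    have h := CouplingAux.central_bound n hn
    push_cast at h ⊢
    exact h
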